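/- Let β ∈ (0, 2) satisfy α + 1/β < k, assume in addition ∫_δ^∞ |g^{(k)}(t)|^β dt < ∞, and let σ : ℝ × Ω → ℝ be a jointly measurable process on a probability space (Ω, F, P) with |σ_s(ω)| ≤ M for all s ∈ [−δ, ∞), ω ∈ Ω, for some M > 0, such that E[ ∫_{−∞}^{−δ} |g^{(k)}(−s) σ_s|^β ds ] < ∞. Then for every ε ∈ (0, δ] there exists a constant C > 0 such that for all integers n ≥ 2k/ε and all i ∈ {k, …, n}: E[ ∫_{i/n−ε}^{i/n} |g_{i,n}(s) σ_s|^β ds ] + ∫_{i/n−ε}^{i/n} |g_{i,n}(s)|^β ds ≤ C n^{−αβ−1}, and E[ ∫_{−∞}^{i/n−ε} |g_{i,n}(s) σ_s|^β ds ] + ∫_{−∞}^{i/n−ε} |g_{i,n}(s)|^β ds ≤ C n^{−kβ}. -/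

import Mathlib

open MeasureTheory Set
open scoped ENNReal

noncomputable section

/-- `g_{i,n}(s) = Σ_{j=0}^k (−1)^j · binom(k, j) · g((i−j)/n − s)`. -/
def kernelIncrement (g : ℝ → ℝ) (k n i : ℕ) (s : ℝ) : ℝ :=
  ∑ j ∈ Finset.range (k + 1),
    (-1 : ℝ) ^ j * (k.choose j) * g (((i : ℝ) - j) / n - s)

open Finset Filter
open scoped Topology fwdDiff

set_option maxHeartbeats 1000000

/- ### Auxiliary lemmas -/

lemma lint_reflect (c : ℝ) (f : ℝ → ℝ≥0∞) (A : Set ℝ) :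
    ∫⁻ s in (fun x : ℝ => c - x) ⁻¹' A, f (c - s) = ∫⁻ u in A, f u := by
  have hmp : MeasurePreserving (fun x : ℝ => c - x) volume volume := by
    have h1 : MeasurePreserving (fun x : ℝ => -x) (volume : Measure ℝ) volume :=
      Measure.measurePreserving_neg _
    have h2 : MeasurePreserving (fun x : ℝ => c + x) (volume : Measure ℝ) volume :=
      measurePreserving_add_left _ _
    simpa [Function.comp_def, sub_eq_add_neg] using h2.comp h1
  exact hmp.setLIntegral_comp_preimage_emb (MeasurableEquiv.subLeft c).measurableEmbedding f A

lemma lint_Iic_rpow (c a p : ℝ) (ha : 0 < a) (hp : 1 < p) :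
    ∫⁻ s in Iic (c - a), ENNReal.ofReal ((c - s) ^ (-p)) ≤
      ENNReal.ofReal (a ^ (1 - p) / (p - 1)) := by
  have hpre : (fun x : ℝ => c - x) ⁻¹' (Ici a) = Iic (c - a) := by
    ext x; simp [le_sub_comm]
  have hrefl := lint_reflect c (fun u => ENNReal.ofReal (u ^ (-p))) (Ici a)
  rw [hpre] at hrefl
  rw [hrefl, setLIntegral_congr (Ioi_ae_eq_Ici (a := a)).symm]
  have hint : IntegrableOn (fun u : ℝ => u ^ (-p)) (Ioi a) :=
    integrableOn_Ioi_rpow_of_lt (by linarith) ha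
  have hnn : 0 ≤ᵐ[volume.restrict (Ioi a)] fun u : ℝ => u ^ (-p) := by
    filter_upwards [self_mem_ae_restrict measurableSet_Ioi] with u hu
    exact Real.rpow_nonneg (le_of_lt (ha.trans hu)) _
  rw [← ofReal_integral_eq_lintegral_ofReal hint hnn]
  apply ENNReal.ofReal_le_ofReal
  rw [integral_Ioi_rpow_of_lt (by linarith) ha]
  rw [show -a ^ (-p + 1) / (-p + 1) = a ^ (1 - p) / (p - 1) from by
    rw [show -p + 1 = 1 - p by ring, show (1 : ℝ) - p = -(p - 1) by ring, div_neg,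
      neg_div, neg_neg]]

lemma fwdDiff_iter_bound : ∀ (k : ℕ) (f : ℝ → ℝ) (h B x : ℝ), 0 < h → 0 < x →
    ContDiffOn ℝ k f (Ioi 0) →
    (∀ t ∈ Icc x (x + k * h), |iteratedDeriv k f t| ≤ B) →
    |(Δ_[h])^[k] f x| ≤ h ^ k * B := by
  intro k
  induction k with
  | zero =>
    intro f h B x hh hx _ hB
    simpa using hB x (by constructor <;> simp [le_of_lt hh, hh.le])
  | succ k IH =>
    intro f h B x hh hx hf hB
    have hf1 : DifferentiableOn ℝ f (Ioi 0) := hf.differentiableOn (by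
      simp)
    have hfd : ContDiffOn ℝ k (deriv f) (Ioi 0) :=
      hf.deriv_of_isOpen isOpen_Ioi (by exact_mod_cast le_refl (k+1 : ℕ))
    set F : ℝ → ℝ := (Δ_[h])^[k] f with hF
    set F' : ℝ → ℝ := (Δ_[h])^[k] (deriv f) with hF'
    have key : ∀ t ∈ Icc x (x + h), HasDerivAt F (F' t) t := by
      intro t ht
      have ht0 : 0 < t := lt_of_lt_of_le hx ht.1
      have hsum : F = fun y => ∑ j ∈ range (k + 1),
          ((-1 : ℤ) ^ (k - j) * (k.choose j) : ℤ) • f (y + j • h) := by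
        funext y; exact fwdDiff_iter_eq_sum_shift h f k y
      rw [hsum]
      have : HasDerivAt (fun y => ∑ j ∈ range (k + 1),
          ((-1 : ℤ) ^ (k - j) * (k.choose j) : ℤ) • f (y + j • h))
          (∑ j ∈ range (k + 1),
          ((-1 : ℤ) ^ (k - j) * (k.choose j) : ℤ) • deriv f (t + j • h)) t := by
        apply HasDerivAt.fun_sum
        intro j hj
        have hpt : 0 < t + j • h := by
          have : (0 : ℝ) ≤ j • h := by rw [nsmul_eq_mul]; positivity
          linarith
        have hda : DifferentiableAt ℝ f (t + j • h) :=
          (hf1 _ hpt).differentiableAt (Ioi_mem_nhds hpt)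
        have h1 : HasDerivAt (fun y : ℝ => f (y + j • h)) (deriv f (t + j • h)) t := by
          simpa [Function.comp_def] using (hda.hasDerivAt.comp t ((hasDerivAt_id t).add_const (j • h : ℝ)))
        exact h1.fun_const_smul _
      convert this using 1
      rw [hF', fwdDiff_iter_eq_sum_shift h (deriv f) k t]
    have hbd : ∀ t ∈ Icc x (x + h), ‖F' t‖ ≤ h ^ k * B := by
      intro t ht
      have ht0 : 0 < t := lt_of_lt_of_le hx ht.1
      rw [Real.norm_eq_abs]
      apply IH (deriv f) h B t hh ht0 hfd
      intro u hu
      rw [← iteratedDeriv_succ']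
      apply hB
      constructor
      · linarith [ht.1, hu.1]
      · have h2 : t + k * h ≤ x + (k + 1) * h := by push_cast; nlinarith [ht.2]
        have h3 := hu.2.trans h2
        push_cast at h3 ⊢
        linarith
    have hconv : Convex ℝ (Icc x (x + h)) := convex_Icc _ _
    have hmain := hconv.norm_image_sub_le_of_norm_hasDerivWithin_le
      (fun t ht => (key t ht).hasDerivWithinAt) hbd
      (left_mem_Icc.mpr (by linarith)) (right_mem_Icc.mpr (by linarith))
    have hstep : (Δ_[h])^[k+1] f x = F (x + h) - F x := by
      rw [Function.iterate_succ_apply' (Δ_[h]) k f]; rfl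
    rw [hstep]
    calc |F (x + h) - F x| ≤ h ^ k * B * ‖x + h - x‖ := by
          simpa [Real.norm_eq_abs] using hmain
      _ = h ^ (k + 1) * B := by
          rw [show x + h - x = h by ring, Real.norm_eq_abs, abs_of_pos hh]; ring

lemma kernelIncrement_eq (g : ℝ → ℝ) (k n i : ℕ) (s : ℝ) (hn : (n:ℝ) ≠ 0) :
    kernelIncrement g k n i s = (Δ_[(1:ℝ)/n])^[k] g (((i : ℝ) - k) / n - s) := by
  rw [fwdDiff_iter_eq_sum_shift, kernelIncrement]
  conv_rhs => rw [← Finset.sum_range_reflect]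
  apply Finset.sum_congr rfl
  intro j hj
  have hjk : j ≤ k := Nat.lt_succ_iff.mp (Finset.mem_range.mp hj)
  rw [show k + 1 - 1 - j = k - j from by omega, Nat.sub_sub_self hjk, Nat.choose_symm hjk,
    zsmul_eq_mul, nsmul_eq_mul]
  push_cast [Nat.cast_sub hjk]
  rw [show ((i:ℝ) - k) / n - s + ((k:ℝ) - j) * (1/n) = ((i:ℝ) - j)/n - s from by
    field_simp; ring]

lemma iD_eq (k : ℕ) (g : ℝ → ℝ) :
    EqOn (iteratedDerivWithin k g (Ioi (0:ℝ))) (iteratedDeriv k g) (Ioi 0) := by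
  intro x hx
  rw [iteratedDerivWithin_eq_iteratedFDerivWithin, iteratedDeriv_eq_iteratedFDeriv,
    iteratedFDerivWithin_of_isOpen k isOpen_Ioi hx]

lemma gk_cont (k : ℕ) (g : ℝ → ℝ) (hg : ContDiffOn ℝ k g (Ioi 0)) :
    ContinuousOn (iteratedDeriv k g) (Ioi 0) :=
  (hg.continuousOn_iteratedDerivWithin le_rfl (isOpen_Ioi.uniqueDiffOn)).congr (iD_eq k g).symm

lemma gk_sup (k : ℕ) (α δ C₁ : ℝ) (hC₁ : 0 < C₁) (g : ℝ → ℝ)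
    (hgsmooth : ContDiffOn ℝ k g (Ioi 0)) (hδ : 0 < δ) (hαk : α - k < 0)
    (hgk : ∀ t ∈ Ioo (0:ℝ) δ, |iteratedDeriv k g t| ≤ C₁ * t ^ (α - k))
    (hgkdec : ∀ s t : ℝ, δ < s → s ≤ t → |iteratedDeriv k g t| ≤ |iteratedDeriv k g s|)
    (a : ℝ) (ha : 0 < a) (haδ : a < δ) :
    ∀ t, a ≤ t → |iteratedDeriv k g t| ≤ C₁ * a ^ (α - k) := by
  have hcont := gk_cont k g hgsmooth
  have haa : C₁ * δ ^ (α - k) ≤ C₁ * a ^ (α - k) :=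
    mul_le_mul_of_nonneg_left (Real.rpow_le_rpow_of_nonpos ha haδ.le hαk.le) hC₁.le
  have hδb : |iteratedDeriv k g δ| ≤ C₁ * δ ^ (α - k) := by
    have hne : (𝓝[Ioo (0:ℝ) δ] δ).NeBot := by
      rw [nhdsWithin_Ioo_eq_nhdsLT hδ]; infer_instance
    have t1 : Tendsto (fun s => |iteratedDeriv k g s|) (𝓝[Ioo (0:ℝ) δ] δ)
        (𝓝 |iteratedDeriv k g δ|) :=
      ((hcont.continuousWithinAt hδ).mono Ioo_subset_Ioi_self).abs
    have t2 : Tendsto (fun s : ℝ => C₁ * s ^ (α - k)) (𝓝[Ioo (0:ℝ) δ] δ)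
        (𝓝 (C₁ * δ ^ (α - k)))  :=
      (((Real.continuousAt_rpow_const δ (α - k) (Or.inl hδ.ne')).tendsto.const_mul
        C₁).mono_left nhdsWithin_le_nhds)
    refine le_of_tendsto_of_tendsto t1 t2 ?_
    filter_upwards [self_mem_nhdsWithin] with s hs using hgk s hs
  intro t hat
  rcases lt_or_ge t δ with h | h
  · calc |iteratedDeriv k g t| ≤ C₁ * t ^ (α - k) := hgk t ⟨lt_of_lt_of_le ha hat, h⟩
      _ ≤ C₁ * a ^ (α - k) :=
        mul_le_mul_of_nonneg_left (Real.rpow_le_rpow_of_nonpos ha hat hαk.le) hC₁.le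
  · rcases eq_or_lt_of_le h with rfl | hlt
    · exact hδb.trans haa
    · have hne : (𝓝[Ioo δ t] δ).NeBot := by
        rw [nhdsWithin_Ioo_eq_nhdsGT hlt]; infer_instance
      have t1 : Tendsto (fun s => |iteratedDeriv k g s|) (𝓝[Ioo δ t] δ)
          (𝓝 |iteratedDeriv k g δ|) :=
        ((hcont.continuousWithinAt hδ).mono
          (fun s hs => lt_trans hδ hs.1 : Ioo δ t ⊆ Ioi 0)).abs
      have hev : ∀ᶠ s in 𝓝[Ioo δ t] δ, |iteratedDeriv k g t| ≤ |iteratedDeriv k g s| := by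
        filter_upwards [self_mem_nhdsWithin] with s hs
        exact hgkdec s t hs.1 hs.2.le
      exact (ge_of_tendsto t1 hev).trans (hδb.trans haa)

lemma KI_direct (g : ℝ → ℝ) (k n i : ℕ) (s : ℝ) (α δ C₁ : ℝ) (hC₁ : 0 < C₁) (hα : 0 < α)
    (hg0 : ∀ t ≤ (0:ℝ), g t = 0) (hgα : ∀ t ∈ Ioo (0:ℝ) δ, |g t| ≤ C₁ * t ^ α)
    (hn : 0 < (n:ℝ)) (hx0 : 0 ≤ (i:ℝ)/n - s) (hxδ : (i:ℝ)/n - s < δ) :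
    |kernelIncrement g k n i s| ≤ 2^k * C₁ * ((i:ℝ)/n - s) ^ α := by
  set x := (i:ℝ)/n - s with hxdef
  have hterm : ∀ j ∈ Finset.range (k+1),
      |(-1 : ℝ) ^ j * (k.choose j) * g (((i : ℝ) - j) / n - s)|
        ≤ (k.choose j : ℝ) * (C₁ * x ^ α) := by
    intro j hj
    have ha : ((i:ℝ) - j)/n - s ≤ x := by
      rw [hxdef]
      have hij : ((i:ℝ) - j)/n ≤ (i:ℝ)/n := by
        gcongr
        · simp
      linarith
    have habs : |(-1 : ℝ) ^ j * (k.choose j) * g (((i : ℝ) - j) / n - s)|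
        = (k.choose j : ℝ) * |g (((i : ℝ) - j) / n - s)| := by
      rw [abs_mul, abs_mul, abs_pow, abs_neg, abs_one, one_pow, one_mul,
        abs_of_nonneg (by positivity : (0:ℝ) ≤ (k.choose j : ℝ))]
    rw [habs]
    apply mul_le_mul_of_nonneg_left ?_ (by positivity : (0:ℝ) ≤ (k.choose j : ℝ))
    rcases le_or_gt (((i : ℝ) - j) / n - s) 0 with h0 | h0
    · rw [hg0 _ h0, abs_zero]
      positivity
    · calc |g (((i : ℝ) - j) / n - s)| ≤ C₁ * (((i : ℝ) - j) / n - s) ^ α :=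
          hgα _ ⟨h0, lt_of_le_of_lt ha hxδ⟩
        _ ≤ C₁ * x ^ α := by
          apply mul_le_mul_of_nonneg_left (Real.rpow_le_rpow h0.le ha hα.le) hC₁.le
  calc |kernelIncrement g k n i s| ≤ ∑ j ∈ Finset.range (k+1),
        |(-1 : ℝ) ^ j * (k.choose j) * g (((i : ℝ) - j) / n - s)| :=
        Finset.abs_sum_le_sum_abs _ _
    _ ≤ ∑ j ∈ Finset.range (k+1), (k.choose j : ℝ) * (C₁ * x ^ α) :=
        Finset.sum_le_sum hterm
    _ = 2^k * C₁ * x ^ α := by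
        rw [← Finset.sum_mul]
        norm_cast
        rw [Nat.sum_range_choose]
        push_cast; ring

lemma KI_deriv (g : ℝ → ℝ) (k n i : ℕ) (s B : ℝ)
    (hgsmooth : ContDiffOn ℝ k g (Ioi 0)) (hn : 0 < (n:ℝ))
    (hx : 0 < ((i:ℝ) - k)/n - s)
    (hB : ∀ t ∈ Icc (((i:ℝ) - k)/n - s) ((i:ℝ)/n - s), |iteratedDeriv k g t| ≤ B) :
    |kernelIncrement g k n i s| ≤ (1/(n:ℝ))^k * B := by
  rw [kernelIncrement_eq g k n i s hn.ne']
  apply fwdDiff_iter_bound k g (1/(n:ℝ)) B _ (by positivity) hx hgsmooth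
  intro t ht
  apply hB
  refine ⟨ht.1, ht.2.trans_eq ?_⟩
  field_simp
  ring

lemma rpow_div_helper (c ν q : ℝ) (hc : 0 < c) (hν : 0 < ν) : (c/ν)^q = c^q * ν^(-q) := by
  rw [Real.div_rpow hc.le hν.le, Real.rpow_neg hν.le, div_eq_mul_inv]

lemma pow_inv_helper (ν : ℝ) (hν : 0 < ν) (k : ℕ) (β : ℝ) :
    (((1:ℝ)/ν)^k)^β = ν^(-(k:ℝ)*β) := by
  rw [one_div, inv_pow, ← Real.rpow_natCast ν k, ← Real.rpow_neg hν.le,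
    ← Real.rpow_mul hν.le]

/-- Lemma 4.10: moment bounds for the kernel increments against a bounded volatility. -/
theorem stmt_10
    (k : ℕ) (hk : 1 ≤ k) (α δ C₁ : ℝ)
    (hα : 0 < α) (hαk : α < k) (hδ : 0 < δ) (hC₁ : 0 < C₁)
    (g : ℝ → ℝ)
    (hg0 : ∀ t ≤ (0 : ℝ), g t = 0)
    (hgsmooth : ContDiffOn ℝ k g (Set.Ioi 0))
    (hgα : ∀ t ∈ Set.Ioo (0 : ℝ) δ, |g t| ≤ C₁ * t ^ α)
    (hgk : ∀ t ∈ Set.Ioo (0 : ℝ) δ, |iteratedDeriv k g t| ≤ C₁ * t ^ (α - k))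
    (hgkdec : ∀ s t : ℝ, δ < s → s ≤ t → |iteratedDeriv k g t| ≤ |iteratedDeriv k g s|)
    (β : ℝ) (hβ0 : 0 < β) (hβ2 : β < 2) (hαβk : α + 1 / β < k)
    (hgkβ : ∫⁻ t in Set.Ioi δ, ENNReal.ofReal (|iteratedDeriv k g t| ^ β) < ⊤)
    {Ω : Type*} [MeasurableSpace Ω] (P : Measure Ω) [IsProbabilityMeasure P]
    (σ : ℝ → Ω → ℝ) (hmeas : Measurable (Function.uncurry σ))
    (M : ℝ) (hM : 0 < M) (hbound : ∀ s ∈ Set.Ici (-δ), ∀ ω, |σ s ω| ≤ M)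
    (hH : ∫⁻ ω, (∫⁻ s in Set.Iic (-δ),
        ENNReal.ofReal (|iteratedDeriv k g (-s) * σ s ω| ^ β)) ∂P < ⊤) :
    ∀ ε : ℝ, 0 < ε → ε ≤ δ →
      ∃ C > (0 : ℝ), ∀ n : ℕ, (2 * k / ε : ℝ) ≤ n → ∀ i : ℕ, k ≤ i → i ≤ n →
        ((∫⁻ ω, (∫⁻ s in Set.Ioc ((i : ℝ) / n - ε) ((i : ℝ) / n),
              ENNReal.ofReal (|kernelIncrement g k n i s * σ s ω| ^ β)) ∂P) +
            (∫⁻ s in Set.Ioc ((i : ℝ) / n - ε) ((i : ℝ) / n),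
              ENNReal.ofReal (|kernelIncrement g k n i s| ^ β)) ≤
          ENNReal.ofReal (C * (n : ℝ) ^ (-α * β - 1))) ∧
        ((∫⁻ ω, (∫⁻ s in Set.Iic ((i : ℝ) / n - ε),
              ENNReal.ofReal (|kernelIncrement g k n i s * σ s ω| ^ β)) ∂P) +
            (∫⁻ s in Set.Iic ((i : ℝ) / n - ε),
              ENNReal.ofReal (|kernelIncrement g k n i s| ^ β)) ≤
          ENNReal.ofReal (C * (n : ℝ) ^ (-(k : ℝ) * β))) := by
  intro ε hε hεδ
  have hk0 : (0:ℝ) < k := by exact_mod_cast Nat.lt_of_lt_of_le Nat.zero_lt_one hk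
  have hαkR : α - (k:ℝ) < 0 := by linarith
  set p : ℝ := ((k:ℝ) - α) * β with hpdef
  have hp1 : (1:ℝ) < p := by
    have h1 : 1 / β < (k:ℝ) - α := by linarith
    have h2 := mul_lt_mul_of_pos_right h1 hβ0
    rwa [div_mul_cancel₀ 1 hβ0.ne'] at h2
  have hexp : (α - (k:ℝ)) * β = -p := by rw [hpdef]; ring
  set K : ℝ := C₁ * (ε/2) ^ (α - (k:ℝ)) with hKdef
  have hK0 : 0 < K := mul_pos hC₁ (Real.rpow_pos_of_pos (by linarith) _)
  have hsup : ∀ t, ε/2 ≤ t → |iteratedDeriv k g t| ≤ K :=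
    gk_sup k α δ C₁ hC₁ g hgsmooth hδ hαkR hgk hgkdec (ε/2) (by linarith) (by linarith)
  set J : ℝ≥0∞ := ∫⁻ t in Set.Ioi δ, ENNReal.ofReal (|iteratedDeriv k g t| ^ β) with hJdef
  set H : ℝ≥0∞ := ∫⁻ ω, (∫⁻ s in Set.Iic (-δ),
      ENNReal.ofReal (|iteratedDeriv k g (-s) * σ s ω| ^ β)) ∂P with hHdef
  have hHJ : H + J ≠ ⊤ := ENNReal.add_ne_top.mpr ⟨hH.ne, hgkβ.ne⟩
  set Ca : ℝ := (2^k*C₁)^β * (2*(k:ℝ))^(α*β+1) with hCadef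
  set Cb : ℝ := C₁^β * (2:ℝ)^p * ((2*(k:ℝ))^(1-p)/(p-1)) with hCbdef
  have hCa0 : 0 < Ca :=
    mul_pos (Real.rpow_pos_of_pos (by positivity) _) (Real.rpow_pos_of_pos (by linarith) _)
  have hCb0 : 0 < Cb := by
    apply mul_pos (mul_pos (Real.rpow_pos_of_pos hC₁ _) (Real.rpow_pos_of_pos two_pos _))
    exact div_pos (Real.rpow_pos_of_pos (by linarith) _) (by linarith)
  have hMβ : (0:ℝ) ≤ M ^ β := Real.rpow_nonneg hM.le _
  set CA : ℝ := (M^β + 1) * (Ca + Cb) with hCAdef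
  set CB : ℝ := (H + J).toReal + (M^β + 1) * K^β * (1+δ) with hCBdef
  have hCA0 : 0 < CA := mul_pos (by linarith) (by linarith)
  have hCB0 : 0 ≤ CB := by
    have h1 := ENNReal.toReal_nonneg (a := H + J)
    have hKβ : (0:ℝ) ≤ K ^ β := Real.rpow_nonneg hK0.le _
    have h2 : (0:ℝ) ≤ (M^β + 1) * K^β * (1+δ) :=
      mul_nonneg (mul_nonneg (by linarith) hKβ) (by linarith)
    rw [hCBdef]
    linarith
  refine ⟨CA + CB + 1, by linarith, ?_⟩
  intro n hn i hik hin
  have hn0 : (0:ℝ) < n := lt_of_lt_of_le (by positivity) hn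
  have h2k : 2*(k:ℝ) ≤ n * ε := by
    rw [div_le_iff₀ hε] at hn; linarith
  have hkn : (k:ℝ)/n ≤ ε/2 := by rw [div_le_div_iff₀ hn0 two_pos]; linarith
  have h2kn : 2*(k:ℝ)/n ≤ ε := by rw [div_le_iff₀ hn0]; linarith
  have hkn0 : (0:ℝ) < 2*(k:ℝ)/n := by positivity
  have hin' : (i:ℝ)/n ≤ 1 := by
    rw [div_le_one hn0]; exact_mod_cast hin
  have hi0 : (0:ℝ) ≤ (i:ℝ)/n := by positivity
  have hik' : (0:ℝ) ≤ (i:ℝ) - k := by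
    have : (k:ℝ) ≤ i := by exact_mod_cast hik
    linarith
  have hikn : ∀ s : ℝ, ((i:ℝ) - k)/n - s = (i:ℝ)/n - s - (k:ℝ)/n := by
    intro s; rw [sub_div]; ring
  have habsmul : ∀ a b : ℝ, |a * b|^β = |a|^β * |b|^β := fun a b => by
    rw [abs_mul, Real.mul_rpow (abs_nonneg _) (abs_nonneg _)]
  have hνk : (((1:ℝ)/n)^k)^β = (n:ℝ)^(-(k:ℝ)*β) := pow_inv_helper _ hn0 k β
  have hνknn : (0:ℝ) ≤ (n:ℝ)^(-(k:ℝ)*β) := Real.rpow_nonneg hn0.le _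
  -- ### Claim 1, deterministic part
  have I1 : (∫⁻ s in Set.Ioc ((i : ℝ) / n - ε) ((i : ℝ) / n),
      ENNReal.ofReal (|kernelIncrement g k n i s| ^ β)) ≤
      ENNReal.ofReal ((Ca + Cb) * (n:ℝ)^(-α*β-1)) := by
    have hsplit : Set.Ioc ((i:ℝ)/n - ε) ((i:ℝ)/n) =
        Set.Ioc ((i:ℝ)/n - ε) ((i:ℝ)/n - 2*(k:ℝ)/n) ∪
        Set.Ioc ((i:ℝ)/n - 2*(k:ℝ)/n) ((i:ℝ)/n) :=
      (Set.Ioc_union_Ioc_eq_Ioc (by linarith) (by linarith)).symm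
    rw [hsplit, lintegral_union measurableSet_Ioc (Set.Ioc_disjoint_Ioc_of_le le_rfl)]
    have hfar : (∫⁻ s in Set.Ioc ((i:ℝ)/n - ε) ((i:ℝ)/n - 2*(k:ℝ)/n),
        ENNReal.ofReal (|kernelIncrement g k n i s| ^ β)) ≤
        ENNReal.ofReal (Cb * (n:ℝ)^(-α*β-1)) := by
      have hpt : ∀ s ∈ Set.Ioc ((i:ℝ)/n - ε) ((i:ℝ)/n - 2*(k:ℝ)/n),
          ENNReal.ofReal (|kernelIncrement g k n i s| ^ β) ≤
          ENNReal.ofReal ((((1:ℝ)/n)^k)^β * (C₁^β * 2^p) * (((i:ℝ)/n - s)^(-p))) := by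
        intro s hs
        have hx1 : 2*(k:ℝ)/n ≤ (i:ℝ)/n - s := by linarith [hs.2]
        have hx2 : (i:ℝ)/n - s < ε := by linarith [hs.1]
        have hxpos : (0:ℝ) < (i:ℝ)/n - s := lt_of_lt_of_le hkn0 hx1
        have hlow_ge : ((i:ℝ)/n - s)/2 ≤ ((i:ℝ) - k)/n - s := by
          rw [hikn s]
          have := mul_div_assoc (2:ℝ) (k:ℝ) (n:ℝ)
          linarith
        have hlowpos : (0:ℝ) < ((i:ℝ) - k)/n - s :=
          lt_of_lt_of_le (by positivity) hlow_ge
        have hKI : |kernelIncrement g k n i s| ≤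
            ((1:ℝ)/n)^k * (C₁ * (((i:ℝ)/n - s)/2) ^ (α - (k:ℝ))) := by
          apply KI_deriv g k n i s _ hgsmooth hn0 hlowpos
          intro t ht
          have ht0 : (0:ℝ) < t := lt_of_lt_of_le hlowpos ht.1
          have htδ : t < δ := by
            have := ht.2; linarith
          calc |iteratedDeriv k g t| ≤ C₁ * t ^ (α - (k:ℝ)) := hgk t ⟨ht0, htδ⟩
            _ ≤ C₁ * (((i:ℝ)/n - s)/2) ^ (α - (k:ℝ)) := by
              apply mul_le_mul_of_nonneg_left ?_ hC₁.le
              exact Real.rpow_le_rpow_of_nonpos (by positivity)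
                (le_trans hlow_ge ht.1) hαkR.le
        apply ENNReal.ofReal_le_ofReal
        calc |kernelIncrement g k n i s| ^ β ≤
            (((1:ℝ)/n)^k * (C₁ * (((i:ℝ)/n - s)/2) ^ (α - (k:ℝ))))^β :=
              Real.rpow_le_rpow (abs_nonneg _) hKI hβ0.le
          _ = (((1:ℝ)/n)^k)^β * (C₁^β * 2^p) * (((i:ℝ)/n - s)^(-p)) := by
              rw [Real.mul_rpow (by positivity) (by positivity),
                Real.mul_rpow hC₁.le (by positivity),
                ← Real.rpow_mul (by positivity : (0:ℝ) ≤ ((i:ℝ)/n - s)/2), hexp,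
                rpow_div_helper _ 2 (-p) hxpos two_pos, neg_neg]
              ring
      calc (∫⁻ s in Set.Ioc ((i:ℝ)/n - ε) ((i:ℝ)/n - 2*(k:ℝ)/n),
            ENNReal.ofReal (|kernelIncrement g k n i s| ^ β))
          ≤ ∫⁻ s in Set.Ioc ((i:ℝ)/n - ε) ((i:ℝ)/n - 2*(k:ℝ)/n),
            ENNReal.ofReal ((((1:ℝ)/n)^k)^β * (C₁^β * 2^p) * (((i:ℝ)/n - s)^(-p))) :=
            setLIntegral_mono' measurableSet_Ioc hpt
        _ ≤ ∫⁻ s in Set.Iic ((i:ℝ)/n - 2*(k:ℝ)/n),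
            ENNReal.ofReal ((((1:ℝ)/n)^k)^β * (C₁^β * 2^p) * (((i:ℝ)/n - s)^(-p))) :=
            lintegral_mono_set Set.Ioc_subset_Iic_self
        _ = ENNReal.ofReal ((((1:ℝ)/n)^k)^β * (C₁^β * 2^p)) *
            ∫⁻ s in Set.Iic ((i:ℝ)/n - 2*(k:ℝ)/n), ENNReal.ofReal (((i:ℝ)/n - s)^(-p)) := by
            simp_rw [ENNReal.ofReal_mul (by positivity : (0:ℝ) ≤ (((1:ℝ)/n)^k)^β * (C₁^β * 2^p))]
            rw [lintegral_const_mul' _ _ ENNReal.ofReal_ne_top]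
        _ ≤ ENNReal.ofReal ((((1:ℝ)/n)^k)^β * (C₁^β * 2^p)) *
            ENNReal.ofReal ((2*(k:ℝ)/n) ^ (1 - p) / (p - 1)) :=
            mul_le_mul_of_nonneg_left (lint_Iic_rpow ((i:ℝ)/n) (2*(k:ℝ)/n) p hkn0 hp1) zero_le
        _ = ENNReal.ofReal ((((1:ℝ)/n)^k)^β * (C₁^β * 2^p) *
            ((2*(k:ℝ)/n) ^ (1 - p) / (p - 1))) :=
            (ENNReal.ofReal_mul (by positivity)).symm
        _ ≤ ENNReal.ofReal (Cb * (n:ℝ)^(-α*β-1)) := by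
            apply ENNReal.ofReal_le_ofReal
            apply le_of_eq
            rw [hνk, rpow_div_helper (2*(k:ℝ)) _ (1-p) (by linarith) hn0, hCbdef]
            calc (n:ℝ)^(-(k:ℝ)*β) * (C₁^β * 2^p) * ((2*(k:ℝ))^(1-p) * (n:ℝ)^(-(1-p)) / (p-1))
                = C₁^β * (2:ℝ)^p * ((2*(k:ℝ))^(1-p)/(p-1)) *
                  ((n:ℝ)^(-(k:ℝ)*β) * (n:ℝ)^(-(1-p))) := by ring
              _ = C₁^β * (2:ℝ)^p * ((2*(k:ℝ))^(1-p)/(p-1)) * (n:ℝ)^(-α*β-1) := by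
                  rw [← Real.rpow_add hn0]
                  congr 1
                  rw [hpdef]; ring
    have hnear : (∫⁻ s in Set.Ioc ((i:ℝ)/n - 2*(k:ℝ)/n) ((i:ℝ)/n),
        ENNReal.ofReal (|kernelIncrement g k n i s| ^ β)) ≤
        ENNReal.ofReal (Ca * (n:ℝ)^(-α*β-1)) := by
      have hpt : ∀ s ∈ Set.Ioc ((i:ℝ)/n - 2*(k:ℝ)/n) ((i:ℝ)/n),
          ENNReal.ofReal (|kernelIncrement g k n i s| ^ β) ≤
          ENNReal.ofReal ((2^k*C₁)^β * (2*(k:ℝ)/n)^(α*β)) := by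
        intro s hs
        have hx0 : (0:ℝ) ≤ (i:ℝ)/n - s := by linarith [hs.2]
        have hx1 : (i:ℝ)/n - s < 2*(k:ℝ)/n := by linarith [hs.1]
        have hxδ : (i:ℝ)/n - s < δ := lt_of_lt_of_le hx1 (le_trans h2kn hεδ)
        have hKI := KI_direct g k n i s α δ C₁ hC₁ hα hg0 hgα hn0 hx0 hxδ
        apply ENNReal.ofReal_le_ofReal
        calc |kernelIncrement g k n i s| ^ β ≤ (2^k * C₁ * ((i:ℝ)/n - s) ^ α)^β :=
              Real.rpow_le_rpow (abs_nonneg _) hKI hβ0.le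
          _ = (2^k*C₁)^β * (((i:ℝ)/n - s) ^ α)^β := by
              rw [Real.mul_rpow (by positivity) (Real.rpow_nonneg hx0 _)]
          _ ≤ (2^k*C₁)^β * (2*(k:ℝ)/n)^(α*β) := by
              apply mul_le_mul_of_nonneg_left ?_ (by positivity)
              rw [← Real.rpow_mul hx0]
              exact Real.rpow_le_rpow hx0 hx1.le (by positivity)
      calc (∫⁻ s in Set.Ioc ((i:ℝ)/n - 2*(k:ℝ)/n) ((i:ℝ)/n),
            ENNReal.ofReal (|kernelIncrement g k n i s| ^ β))
          ≤ ∫⁻ _s in Set.Ioc ((i:ℝ)/n - 2*(k:ℝ)/n) ((i:ℝ)/n),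
            ENNReal.ofReal ((2^k*C₁)^β * (2*(k:ℝ)/n)^(α*β)) :=
            setLIntegral_mono' measurableSet_Ioc hpt
        _ = ENNReal.ofReal ((2^k*C₁)^β * (2*(k:ℝ)/n)^(α*β)) *
            volume (Set.Ioc ((i:ℝ)/n - 2*(k:ℝ)/n) ((i:ℝ)/n)) := setLIntegral_const _ _
        _ = ENNReal.ofReal ((2^k*C₁)^β * (2*(k:ℝ)/n)^(α*β) * (2*(k:ℝ)/n)) := by
            rw [Real.volume_Ioc, ← ENNReal.ofReal_mul (by positivity)]
            congr 2
            ring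
        _ ≤ ENNReal.ofReal (Ca * (n:ℝ)^(-α*β-1)) := by
            apply ENNReal.ofReal_le_ofReal
            apply le_of_eq
            rw [rpow_div_helper (2*(k:ℝ)) _ (α*β) (by linarith) hn0, hCadef]
            have h2kν : 2*(k:ℝ)/n = 2*(k:ℝ) * (n:ℝ)^(-(1:ℝ)) := by
              rw [Real.rpow_neg_one]; ring
            rw [h2kν]
            calc (2^k*C₁)^β * ((2*(k:ℝ))^(α*β) * (n:ℝ)^(-(α*β))) * (2*(k:ℝ) * (n:ℝ)^(-(1:ℝ)))
                = (2^k*C₁)^β * ((2*(k:ℝ))^(α*β) * (2*(k:ℝ))) *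
                  ((n:ℝ)^(-(α*β)) * (n:ℝ)^(-(1:ℝ))) := by ring
              _ = (2^k*C₁)^β * (2*(k:ℝ))^(α*β+1) * (n:ℝ)^(-α*β-1) := by
                  rw [← Real.rpow_add_one (ne_of_gt (by linarith : (0:ℝ) < 2*(k:ℝ))) (α*β),
                    ← Real.rpow_add hn0, show -(α*β) + (-(1:ℝ)) = -α*β-1 from by ring]
    calc _ ≤ ENNReal.ofReal (Cb * (n:ℝ)^(-α*β-1)) + ENNReal.ofReal (Ca * (n:ℝ)^(-α*β-1)) :=
          add_le_add hfar hnear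
      _ = ENNReal.ofReal ((Ca + Cb) * (n:ℝ)^(-α*β-1)) := by
          rw [← ENNReal.ofReal_add (by positivity) (by positivity)]
          congr 1
          ring
  -- ### Claim 1, stochastic part
  have hX0 : (0:ℝ) ≤ (n:ℝ)^(-α*β-1) := Real.rpow_nonneg hn0.le _
  have I1σ : (∫⁻ ω, (∫⁻ s in Set.Ioc ((i : ℝ) / n - ε) ((i : ℝ) / n),
      ENNReal.ofReal (|kernelIncrement g k n i s * σ s ω| ^ β)) ∂P) ≤
      ENNReal.ofReal (M^β) * ENNReal.ofReal ((Ca + Cb) * (n:ℝ)^(-α*β-1)) := by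
    have hω : ∀ ω, (∫⁻ s in Set.Ioc ((i : ℝ) / n - ε) ((i : ℝ) / n),
        ENNReal.ofReal (|kernelIncrement g k n i s * σ s ω| ^ β)) ≤
        ENNReal.ofReal (M^β) * (∫⁻ s in Set.Ioc ((i : ℝ) / n - ε) ((i : ℝ) / n),
        ENNReal.ofReal (|kernelIncrement g k n i s| ^ β)) := by
      intro ω
      rw [← lintegral_const_mul' _ _ ENNReal.ofReal_ne_top]
      apply setLIntegral_mono' measurableSet_Ioc
      intro s hs
      have hσ : |σ s ω| ≤ M := hbound s (Set.mem_Ici.mpr (by linarith [hs.1, hi0])) ω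
      rw [← ENNReal.ofReal_mul hMβ]
      apply ENNReal.ofReal_le_ofReal
      rw [habsmul]
      calc |kernelIncrement g k n i s|^β * |σ s ω|^β
          ≤ |kernelIncrement g k n i s|^β * M^β :=
            mul_le_mul_of_nonneg_left (Real.rpow_le_rpow (abs_nonneg _) hσ hβ0.le)
              (Real.rpow_nonneg (abs_nonneg _) _)
        _ = M^β * |kernelIncrement g k n i s|^β := mul_comm _ _
    calc (∫⁻ ω, (∫⁻ s in Set.Ioc ((i : ℝ) / n - ε) ((i : ℝ) / n),
          ENNReal.ofReal (|kernelIncrement g k n i s * σ s ω| ^ β)) ∂P)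
        ≤ ∫⁻ _ω, ENNReal.ofReal (M^β) * (∫⁻ s in Set.Ioc ((i : ℝ) / n - ε) ((i : ℝ) / n),
          ENNReal.ofReal (|kernelIncrement g k n i s| ^ β)) ∂P := lintegral_mono hω
      _ = ENNReal.ofReal (M^β) * (∫⁻ s in Set.Ioc ((i : ℝ) / n - ε) ((i : ℝ) / n),
          ENNReal.ofReal (|kernelIncrement g k n i s| ^ β)) := by
          rw [lintegral_const, measure_univ, mul_one]
      _ ≤ _ := mul_le_mul_of_nonneg_left I1 zero_le
  constructor
  · -- Claim 1
    calc (∫⁻ ω, (∫⁻ s in Set.Ioc ((i : ℝ) / n - ε) ((i : ℝ) / n),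
          ENNReal.ofReal (|kernelIncrement g k n i s * σ s ω| ^ β)) ∂P) +
        (∫⁻ s in Set.Ioc ((i : ℝ) / n - ε) ((i : ℝ) / n),
          ENNReal.ofReal (|kernelIncrement g k n i s| ^ β))
        ≤ ENNReal.ofReal (M^β) * ENNReal.ofReal ((Ca + Cb) * (n:ℝ)^(-α*β-1)) +
          ENNReal.ofReal ((Ca + Cb) * (n:ℝ)^(-α*β-1)) := add_le_add I1σ I1
      _ = ENNReal.ofReal (M^β * ((Ca + Cb) * (n:ℝ)^(-α*β-1))) +
          ENNReal.ofReal ((Ca + Cb) * (n:ℝ)^(-α*β-1)) := by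
          rw [← ENNReal.ofReal_mul hMβ]
      _ = ENNReal.ofReal (M^β * ((Ca + Cb) * (n:ℝ)^(-α*β-1)) +
          (Ca + Cb) * (n:ℝ)^(-α*β-1)) := by
          rw [← ENNReal.ofReal_add (by positivity) (by positivity)]
      _ ≤ ENNReal.ofReal ((CA + CB + 1) * (n:ℝ)^(-α*β-1)) := by
          apply ENNReal.ofReal_le_ofReal
          calc M^β * ((Ca + Cb) * (n:ℝ)^(-α*β-1)) + (Ca + Cb) * (n:ℝ)^(-α*β-1)
              = CA * (n:ℝ)^(-α*β-1) := by rw [hCAdef]; ring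
            _ ≤ (CA + CB + 1) * (n:ℝ)^(-α*β-1) :=
              mul_le_mul_of_nonneg_right (by linarith) hX0
  · -- Claim 2
    have hiε : -δ ≤ (i:ℝ)/n - ε := by linarith
    have hsplit2 : Set.Iic ((i:ℝ)/n - ε) =
        Set.Iio (-δ) ∪ Set.Icc (-δ) ((i:ℝ)/n - ε) := (Set.Iio_union_Icc_eq_Iic hiε).symm
    have hdisj : Disjoint (Set.Iio (-δ)) (Set.Icc (-δ) ((i:ℝ)/n - ε)) := by
      rw [Set.disjoint_left]; intro x hx hx2; exact absurd hx2.1 (not_le.mpr hx)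
    have hiknn : (0:ℝ) ≤ ((i:ℝ) - k)/n := div_nonneg hik' hn0.le
    have hmidKI : ∀ s ∈ Set.Icc (-δ) ((i:ℝ)/n - ε),
        |kernelIncrement g k n i s| ≤ ((1:ℝ)/n)^k * K := by
      intro s hs
      have hlow : ε/2 ≤ ((i:ℝ) - k)/n - s := by
        rw [hikn s]; linarith [hs.2, hkn]
      apply KI_deriv g k n i s K hgsmooth hn0 (by linarith)
      intro t ht
      exact hsup t (le_trans hlow ht.1)
    have hfarKI : ∀ s ∈ Set.Iio (-δ),
        |kernelIncrement g k n i s| ≤ ((1:ℝ)/n)^k * |iteratedDeriv k g (-s)| := by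
      intro s hs
      have hsδ : δ < -s := by
        have : s < -δ := hs
        linarith
      apply KI_deriv g k n i s _ hgsmooth hn0 (by linarith [hiknn])
      intro t ht
      apply hgkdec (-s) t hsδ
      calc -s ≤ ((i:ℝ)-k)/n - s := by linarith [hiknn]
        _ ≤ t := ht.1
    have hJrefl : (∫⁻ s in Set.Iic (-δ),
        ENNReal.ofReal (|iteratedDeriv k g (-s)| ^ β)) = J := by
      have hpre : (fun x : ℝ => (0:ℝ) - x) ⁻¹' (Set.Ici δ) = Set.Iic (-δ) := by
        ext x
        simp only [Set.mem_preimage, Set.mem_Ici, Set.mem_Iic]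
        constructor <;> intro h <;> linarith
      have hre := lint_reflect 0 (fun t => ENNReal.ofReal (|iteratedDeriv k g t| ^ β)) (Set.Ici δ)
      rw [hpre] at hre
      simp_rw [zero_sub] at hre
      rw [hre, setLIntegral_congr (Ioi_ae_eq_Ici (a := δ)).symm]
    have hKβ : (0:ℝ) ≤ K ^ β := Real.rpow_nonneg hK0.le _
    have hc2 : (0:ℝ) ≤ (n:ℝ)^(-(k:ℝ)*β) * (K^β * (1+δ)) := by positivity
    have hIccvol : ((i:ℝ)/n - ε) - (-δ) ≤ 1 + δ := by linarith
    -- deterministic part of claim 2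
    have I2 : (∫⁻ s in Set.Iic ((i:ℝ)/n - ε),
        ENNReal.ofReal (|kernelIncrement g k n i s| ^ β)) ≤
        ENNReal.ofReal ((n:ℝ)^(-(k:ℝ)*β)) * J +
        ENNReal.ofReal ((n:ℝ)^(-(k:ℝ)*β) * (K^β * (1+δ))) := by
      rw [hsplit2, lintegral_union measurableSet_Icc hdisj]
      apply add_le_add
      · calc (∫⁻ s in Set.Iio (-δ), ENNReal.ofReal (|kernelIncrement g k n i s| ^ β))
            ≤ ∫⁻ s in Set.Iio (-δ),
              ENNReal.ofReal ((n:ℝ)^(-(k:ℝ)*β) * |iteratedDeriv k g (-s)| ^ β) := by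
              apply setLIntegral_mono' measurableSet_Iio
              intro s hs
              apply ENNReal.ofReal_le_ofReal
              calc |kernelIncrement g k n i s| ^ β
                  ≤ (((1:ℝ)/n)^k * |iteratedDeriv k g (-s)|)^β :=
                    Real.rpow_le_rpow (abs_nonneg _) (hfarKI s hs) hβ0.le
                _ = (n:ℝ)^(-(k:ℝ)*β) * |iteratedDeriv k g (-s)| ^ β := by
                    rw [Real.mul_rpow (by positivity) (abs_nonneg _), hνk]
          _ = ENNReal.ofReal ((n:ℝ)^(-(k:ℝ)*β)) *
              ∫⁻ s in Set.Iio (-δ), ENNReal.ofReal (|iteratedDeriv k g (-s)| ^ β) := by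
              simp_rw [ENNReal.ofReal_mul hνknn]
              rw [lintegral_const_mul' _ _ ENNReal.ofReal_ne_top]
          _ ≤ ENNReal.ofReal ((n:ℝ)^(-(k:ℝ)*β)) *
              ∫⁻ s in Set.Iic (-δ), ENNReal.ofReal (|iteratedDeriv k g (-s)| ^ β) :=
              mul_le_mul_of_nonneg_left (lintegral_mono_set Set.Iio_subset_Iic_self) zero_le
          _ = ENNReal.ofReal ((n:ℝ)^(-(k:ℝ)*β)) * J := by rw [hJrefl]
      · calc (∫⁻ s in Set.Icc (-δ) ((i:ℝ)/n - ε),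
              ENNReal.ofReal (|kernelIncrement g k n i s| ^ β))
            ≤ ∫⁻ _s in Set.Icc (-δ) ((i:ℝ)/n - ε),
              ENNReal.ofReal ((n:ℝ)^(-(k:ℝ)*β) * K^β) := by
              apply setLIntegral_mono' measurableSet_Icc
              intro s hs
              apply ENNReal.ofReal_le_ofReal
              calc |kernelIncrement g k n i s| ^ β ≤ (((1:ℝ)/n)^k * K)^β :=
                    Real.rpow_le_rpow (abs_nonneg _) (hmidKI s hs) hβ0.le
                _ = (n:ℝ)^(-(k:ℝ)*β) * K^β := by
                    rw [Real.mul_rpow (by positivity) hK0.le, hνk]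
          _ = ENNReal.ofReal ((n:ℝ)^(-(k:ℝ)*β) * K^β) *
              volume (Set.Icc (-δ) ((i:ℝ)/n - ε)) := setLIntegral_const _ _
          _ = ENNReal.ofReal ((n:ℝ)^(-(k:ℝ)*β) * K^β * (((i:ℝ)/n - ε) - (-δ))) := by
              rw [Real.volume_Icc, ← ENNReal.ofReal_mul (by positivity)]
          _ ≤ ENNReal.ofReal ((n:ℝ)^(-(k:ℝ)*β) * (K^β * (1+δ))) := by
              apply ENNReal.ofReal_le_ofReal
              calc (n:ℝ)^(-(k:ℝ)*β) * K^β * (((i:ℝ)/n - ε) - (-δ))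
                  ≤ (n:ℝ)^(-(k:ℝ)*β) * K^β * (1+δ) :=
                    mul_le_mul_of_nonneg_left hIccvol (by positivity)
                _ = (n:ℝ)^(-(k:ℝ)*β) * (K^β * (1+δ)) := by ring
    -- stochastic part of claim 2
    have I2σ : (∫⁻ ω, (∫⁻ s in Set.Iic ((i:ℝ)/n - ε),
        ENNReal.ofReal (|kernelIncrement g k n i s * σ s ω| ^ β)) ∂P) ≤
        ENNReal.ofReal ((n:ℝ)^(-(k:ℝ)*β)) * H +
        ENNReal.ofReal (M^β * ((n:ℝ)^(-(k:ℝ)*β) * (K^β * (1+δ)))) := by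
      have hω : ∀ ω, (∫⁻ s in Set.Iic ((i:ℝ)/n - ε),
          ENNReal.ofReal (|kernelIncrement g k n i s * σ s ω| ^ β)) ≤
          ENNReal.ofReal ((n:ℝ)^(-(k:ℝ)*β)) * (∫⁻ s in Set.Iic (-δ),
            ENNReal.ofReal (|iteratedDeriv k g (-s) * σ s ω| ^ β)) +
          ENNReal.ofReal (M^β * ((n:ℝ)^(-(k:ℝ)*β) * (K^β * (1+δ)))) := by
        intro ω
        rw [hsplit2, lintegral_union measurableSet_Icc hdisj]
        apply add_le_add
        · calc (∫⁻ s in Set.Iio (-δ),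
                ENNReal.ofReal (|kernelIncrement g k n i s * σ s ω| ^ β))
              ≤ ∫⁻ s in Set.Iio (-δ),
                ENNReal.ofReal ((n:ℝ)^(-(k:ℝ)*β) *
                  |iteratedDeriv k g (-s) * σ s ω| ^ β) := by
                apply setLIntegral_mono' measurableSet_Iio
                intro s hs
                apply ENNReal.ofReal_le_ofReal
                rw [habsmul, habsmul]
                calc |kernelIncrement g k n i s| ^ β * |σ s ω| ^ β
                    ≤ ((n:ℝ)^(-(k:ℝ)*β) * |iteratedDeriv k g (-s)| ^ β) * |σ s ω| ^ β := by
                      apply mul_le_mul_of_nonneg_right ?_ (Real.rpow_nonneg (abs_nonneg _) _)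
                      calc |kernelIncrement g k n i s| ^ β
                          ≤ (((1:ℝ)/n)^k * |iteratedDeriv k g (-s)|)^β :=
                            Real.rpow_le_rpow (abs_nonneg _) (hfarKI s hs) hβ0.le
                        _ = (n:ℝ)^(-(k:ℝ)*β) * |iteratedDeriv k g (-s)| ^ β := by
                            rw [Real.mul_rpow (by positivity) (abs_nonneg _), hνk]
                  _ = (n:ℝ)^(-(k:ℝ)*β) * (|iteratedDeriv k g (-s)| ^ β * |σ s ω| ^ β) := by
                      ring
            _ = ENNReal.ofReal ((n:ℝ)^(-(k:ℝ)*β)) * ∫⁻ s in Set.Iio (-δ),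
                ENNReal.ofReal (|iteratedDeriv k g (-s) * σ s ω| ^ β) := by
                simp_rw [habsmul]
                simp_rw [ENNReal.ofReal_mul hνknn]
                rw [lintegral_const_mul' _ _ ENNReal.ofReal_ne_top]
            _ ≤ ENNReal.ofReal ((n:ℝ)^(-(k:ℝ)*β)) * ∫⁻ s in Set.Iic (-δ),
                ENNReal.ofReal (|iteratedDeriv k g (-s) * σ s ω| ^ β) :=
                mul_le_mul_of_nonneg_left (lintegral_mono_set Set.Iio_subset_Iic_self) zero_le
        · calc (∫⁻ s in Set.Icc (-δ) ((i:ℝ)/n - ε),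
                ENNReal.ofReal (|kernelIncrement g k n i s * σ s ω| ^ β))
              ≤ ∫⁻ _s in Set.Icc (-δ) ((i:ℝ)/n - ε),
                ENNReal.ofReal (M^β * ((n:ℝ)^(-(k:ℝ)*β) * K^β)) := by
                apply setLIntegral_mono' measurableSet_Icc
                intro s hs
                apply ENNReal.ofReal_le_ofReal
                rw [habsmul]
                have hσ : |σ s ω| ≤ M := hbound s (Set.mem_Ici.mpr hs.1) ω
                calc |kernelIncrement g k n i s| ^ β * |σ s ω| ^ β
                    ≤ ((n:ℝ)^(-(k:ℝ)*β) * K^β) * M^β := by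
                      apply mul_le_mul ?_ (Real.rpow_le_rpow (abs_nonneg _) hσ hβ0.le)
                        (Real.rpow_nonneg (abs_nonneg _) _) (by positivity)
                      calc |kernelIncrement g k n i s| ^ β ≤ (((1:ℝ)/n)^k * K)^β :=
                            Real.rpow_le_rpow (abs_nonneg _) (hmidKI s hs) hβ0.le
                        _ = (n:ℝ)^(-(k:ℝ)*β) * K^β := by
                            rw [Real.mul_rpow (by positivity) hK0.le, hνk]
                  _ = M^β * ((n:ℝ)^(-(k:ℝ)*β) * K^β) := by ring
            _ = ENNReal.ofReal (M^β * ((n:ℝ)^(-(k:ℝ)*β) * K^β)) *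
                volume (Set.Icc (-δ) ((i:ℝ)/n - ε)) := setLIntegral_const _ _
            _ = ENNReal.ofReal (M^β * ((n:ℝ)^(-(k:ℝ)*β) * K^β) * (((i:ℝ)/n - ε) - (-δ))) := by
                rw [Real.volume_Icc, ← ENNReal.ofReal_mul (by positivity)]
            _ ≤ ENNReal.ofReal (M^β * ((n:ℝ)^(-(k:ℝ)*β) * (K^β * (1+δ)))) := by
                apply ENNReal.ofReal_le_ofReal
                calc M^β * ((n:ℝ)^(-(k:ℝ)*β) * K^β) * (((i:ℝ)/n - ε) - (-δ))
                    ≤ M^β * ((n:ℝ)^(-(k:ℝ)*β) * K^β) * (1+δ) :=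
                      mul_le_mul_of_nonneg_left hIccvol (by positivity)
                  _ = M^β * ((n:ℝ)^(-(k:ℝ)*β) * (K^β * (1+δ))) := by ring
      calc (∫⁻ ω, (∫⁻ s in Set.Iic ((i:ℝ)/n - ε),
            ENNReal.ofReal (|kernelIncrement g k n i s * σ s ω| ^ β)) ∂P)
          ≤ ∫⁻ ω, (ENNReal.ofReal ((n:ℝ)^(-(k:ℝ)*β)) * (∫⁻ s in Set.Iic (-δ),
              ENNReal.ofReal (|iteratedDeriv k g (-s) * σ s ω| ^ β)) +
            ENNReal.ofReal (M^β * ((n:ℝ)^(-(k:ℝ)*β) * (K^β * (1+δ))))) ∂P :=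
            lintegral_mono hω
        _ = ENNReal.ofReal ((n:ℝ)^(-(k:ℝ)*β)) * H +
            ENNReal.ofReal (M^β * ((n:ℝ)^(-(k:ℝ)*β) * (K^β * (1+δ)))) := by
            rw [lintegral_add_right _ measurable_const,
              lintegral_const_mul' _ _ ENNReal.ofReal_ne_top,
              lintegral_const, measure_univ, mul_one, hHdef]
    calc (∫⁻ ω, (∫⁻ s in Set.Iic ((i:ℝ)/n - ε),
          ENNReal.ofReal (|kernelIncrement g k n i s * σ s ω| ^ β)) ∂P) +
        (∫⁻ s in Set.Iic ((i:ℝ)/n - ε),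
          ENNReal.ofReal (|kernelIncrement g k n i s| ^ β))
        ≤ (ENNReal.ofReal ((n:ℝ)^(-(k:ℝ)*β)) * H +
            ENNReal.ofReal (M^β * ((n:ℝ)^(-(k:ℝ)*β) * (K^β * (1+δ))))) +
          (ENNReal.ofReal ((n:ℝ)^(-(k:ℝ)*β)) * J +
            ENNReal.ofReal ((n:ℝ)^(-(k:ℝ)*β) * (K^β * (1+δ)))) := add_le_add I2σ I2
      _ = ENNReal.ofReal ((n:ℝ)^(-(k:ℝ)*β)) * (H + J) +
          (ENNReal.ofReal (M^β * ((n:ℝ)^(-(k:ℝ)*β) * (K^β * (1+δ)))) +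
            ENNReal.ofReal ((n:ℝ)^(-(k:ℝ)*β) * (K^β * (1+δ)))) := by ring
      _ = ENNReal.ofReal ((n:ℝ)^(-(k:ℝ)*β) * (H + J).toReal) +
          ENNReal.ofReal (M^β * ((n:ℝ)^(-(k:ℝ)*β) * (K^β * (1+δ))) +
            (n:ℝ)^(-(k:ℝ)*β) * (K^β * (1+δ))) := by
          rw [← ENNReal.ofReal_toReal hHJ, ← ENNReal.ofReal_mul hνknn,
            ← ENNReal.ofReal_add (by positivity) hc2, ENNReal.ofReal_toReal hHJ]
      _ = ENNReal.ofReal ((n:ℝ)^(-(k:ℝ)*β) * (H + J).toReal +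
          (M^β * ((n:ℝ)^(-(k:ℝ)*β) * (K^β * (1+δ))) +
            (n:ℝ)^(-(k:ℝ)*β) * (K^β * (1+δ)))) := by
          rw [← ENNReal.ofReal_add (by positivity) (by positivity)]
      _ ≤ ENNReal.ofReal ((CA + CB + 1) * (n:ℝ)^(-(k:ℝ)*β)) := by
          apply ENNReal.ofReal_le_ofReal
          calc (n:ℝ)^(-(k:ℝ)*β) * (H + J).toReal +
              (M^β * ((n:ℝ)^(-(k:ℝ)*β) * (K^β * (1+δ))) +
                (n:ℝ)^(-(k:ℝ)*β) * (K^β * (1+δ)))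
              = CB * (n:ℝ)^(-(k:ℝ)*β) := by rw [hCBdef]; ring
            _ ≤ (CA + CB + 1) * (n:ℝ)^(-(k:ℝ)*β) :=
              mul_le_mul_of_nonneg_right (by linarith) hνknn

end
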